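/- Let v_t, v_o, v_r ∈ ℝ be slip-velocity components, e_t, e_o, e_r > 0, μ > 0, p_n ≥ 0, and set σ = √(e_t²·v_t² + e_o²·v_o² + e_r²·v_r²); assume σ > 0. Then for every triple (p_t, p_o, p_r) in the friction ellipsoid, i.e. with p_t²/e_t² + p_o²/e_o² + p_r²/e_r² ≤ μ²·p_n², the dissipated power satisfies −(v_t·p_t + v_o·p_o + v_r·p_r) ≤ μ·p_n·σ, and this maximum value is attained at the triple p_t* = −e_t²·μ·p_n·v_t/σ, p_o* = −e_o²·μ·p_n·v_o/σ, p_r* = −e_r²·μ·p_n·v_r/σ, which lies in the friction ellipsoid and satisfies the complementarity-form friction equations 0 = e_t²·μ·p_n·v_t + p_t*·σ, 0 = e_o²·μ·p_n·v_o + p_o*·σ, 0 = e_r²·μ·p_n·v_r + p_r*·σ, together with μ²·p_n² − (p_t*)²/e_t² − (p_o*)²/e_o² − (p_r*)²/e_r² = 0. -/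

import Mathlib

set_option maxHeartbeats 1600000


/-- Maximum power dissipation principle over the friction ellipsoid: the dissipated power
is bounded by `μ·p_n·σ`, and the bound is attained at the triple `(p_t*, p_o*, p_r*)`,
which lies on the friction ellipsoid and satisfies the complementarity-form friction
equations. -/
theorem friction_max_power_dissipation
    (vt vo vr et eo er μ pn σ : ℝ)
    (het : 0 < et) (heo : 0 < eo) (her : 0 < er)
    (hμ : 0 < μ) (hpn : 0 ≤ pn)
    (hσ : σ = Real.sqrt (et ^ 2 * vt ^ 2 + eo ^ 2 * vo ^ 2 + er ^ 2 * vr ^ 2))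
    (hσpos : 0 < σ)
    (pt' po' pr' : ℝ)
    (hpt' : pt' = -(et ^ 2 * μ * pn * vt) / σ)
    (hpo' : po' = -(eo ^ 2 * μ * pn * vo) / σ)
    (hpr' : pr' = -(er ^ 2 * μ * pn * vr) / σ) :
    (∀ pt po pr : ℝ,
      pt ^ 2 / et ^ 2 + po ^ 2 / eo ^ 2 + pr ^ 2 / er ^ 2 ≤ μ ^ 2 * pn ^ 2 →
      -(vt * pt + vo * po + vr * pr) ≤ μ * pn * σ) ∧
    pt' ^ 2 / et ^ 2 + po' ^ 2 / eo ^ 2 + pr' ^ 2 / er ^ 2 ≤ μ ^ 2 * pn ^ 2 ∧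
    -(vt * pt' + vo * po' + vr * pr') = μ * pn * σ ∧
    0 = et ^ 2 * μ * pn * vt + pt' * σ ∧
    0 = eo ^ 2 * μ * pn * vo + po' * σ ∧
    0 = er ^ 2 * μ * pn * vr + pr' * σ ∧
    μ ^ 2 * pn ^ 2 - pt' ^ 2 / et ^ 2 - po' ^ 2 / eo ^ 2 - pr' ^ 2 / er ^ 2 = 0 := by
  have hA : (0:ℝ) ≤ et ^ 2 * vt ^ 2 + eo ^ 2 * vo ^ 2 + er ^ 2 * vr ^ 2 := by positivity
  have hσ2 : σ ^ 2 = et ^ 2 * vt ^ 2 + eo ^ 2 * vo ^ 2 + er ^ 2 * vr ^ 2 := by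
    rw [hσ]; exact Real.sq_sqrt hA
  have hσne : σ ≠ 0 := ne_of_gt hσpos
  have h1 : et ≠ 0 := ne_of_gt het
  have h2 : eo ≠ 0 := ne_of_gt heo
  have h3 : er ≠ 0 := ne_of_gt her
  have hlast : μ ^ 2 * pn ^ 2 - pt' ^ 2 / et ^ 2 - po' ^ 2 / eo ^ 2 - pr' ^ 2 / er ^ 2 = 0 := by
    subst hpt' hpo' hpr'
    field_simp
    linear_combination (μ^2*pn^2) * hσ2
  refine ⟨?_, by linarith, ?_, ?_, ?_, ?_, hlast⟩
  · intro pt po pr hle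
    set qt := pt / et with hqt
    set qo := po / eo with hqo
    set qr := pr / er with hqr
    have ept : pt = et * qt := by rw [hqt]; field_simp
    have epo : po = eo * qo := by rw [hqo]; field_simp
    have epr : pr = er * qr := by rw [hqr]; field_simp
    have hq : qt ^ 2 + qo ^ 2 + qr ^ 2 ≤ μ ^ 2 * pn ^ 2 := by
      have e1 : pt ^ 2 / et ^ 2 = qt ^ 2 := by rw [hqt]; field_simp
      have e2 : po ^ 2 / eo ^ 2 = qo ^ 2 := by rw [hqo]; field_simp
      have e3 : pr ^ 2 / er ^ 2 = qr ^ 2 := by rw [hqr]; field_simp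
      linarith [e1, e2, e3, hle]
    rw [ept, epo, epr]
    have hCS : (vt * (et * qt) + vo * (eo * qo) + vr * (er * qr)) ^ 2 ≤
        σ ^ 2 * (qt ^ 2 + qo ^ 2 + qr ^ 2) := by
      rw [hσ2]
      nlinarith [sq_nonneg (et * vt * qo - eo * vo * qt),
        sq_nonneg (et * vt * qr - er * vr * qt),
        sq_nonneg (eo * vo * qr - er * vr * qo)]
    have hM : (0:ℝ) ≤ μ * pn * σ := by positivity
    have hsq : (vt * (et * qt) + vo * (eo * qo) + vr * (er * qr)) ^ 2 ≤ (μ * pn * σ) ^ 2 := by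
      calc _ ≤ σ ^ 2 * (μ ^ 2 * pn ^ 2) := by nlinarith [hCS, sq_nonneg σ]
        _ = (μ * pn * σ) ^ 2 := by ring
    nlinarith [hsq, hM]
  · rw [hpt', hpo', hpr']
    field_simp
    linear_combination (-pn) * hσ2
  · rw [hpt']; field_simp; ring
  · rw [hpo']; field_simp; ring
  · rw [hpr']; field_simp; ring
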